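/- Let p be a prime number and let M be a module over the group algebra ℤ[C_p] that is finitely generated and free as a ℤ-module. If the C_p-action on M is nontrivial (some group element acts non-identically), then M contains a ℤ[C_p]-submodule M' whose rank as a ℤ-module equals p − 1 and on which the C_p-action is nontrivial. -/

import Mathlib

open Polynomial

/-- Let `p` be prime and `M` a `ℤ[C_p]`-module, finitely generated and free as a
`ℤ`-module. If the `C_p`-action on `M` is nontrivial, then `M` contains a
`ℤ[C_p]`-submodule `M'` of rank `p - 1` over `ℤ` on which the `C_p`-action is
nontrivial. -/
theorem exists_submodule_rank_sub_one_nontrivial (p : ℕ) (hp : p.Prime)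
    (M : Type) [AddCommGroup M]
    [Module (MonoidAlgebra ℤ (Multiplicative (ZMod p))) M]
    [Module.Finite ℤ M] [Module.Free ℤ M]
    (hnt : ∃ (g : Multiplicative (ZMod p)) (x : M),
      MonoidAlgebra.of ℤ (Multiplicative (ZMod p)) g • x ≠ x) :
    ∃ M' : Submodule (MonoidAlgebra ℤ (Multiplicative (ZMod p))) M,
      Module.finrank ℤ M' = p - 1 ∧
      ∃ (g : Multiplicative (ZMod p)) (x : M'),
        MonoidAlgebra.of ℤ (Multiplicative (ZMod p)) g • x ≠ x := by
  classical
  haveI : Fact p.Prime := ⟨hp⟩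
  haveI : NeZero p := ⟨hp.ne_zero⟩
  haveI : NoZeroSMulDivisors ℤ M := by
    constructor
    intro c x h
    exact smul_eq_zero.mp h
  obtain ⟨g, x, hgx⟩ := hnt
  set s : MonoidAlgebra ℤ (Multiplicative (ZMod p)) := MonoidAlgebra.of ℤ _ g with hs
  set w : M := s • x - x with hwdef
  have hw : w ≠ 0 := sub_ne_zero.mpr hgx
  have hg1 : g ≠ 1 := by
    rintro rfl
    apply hgx
    rw [hs, map_one, one_smul]
  -- every group element is a power of g, with exponent < p
  have hcover : ∀ h : Multiplicative (ZMod p), ∃ n : ℕ, n < p ∧ g ^ n = h := by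
    intro h
    have ha : Multiplicative.toAdd g ≠ 0 := by
      intro hh
      apply hg1
      have := congrArg Multiplicative.ofAdd hh
      simpa using this
    refine ⟨(Multiplicative.toAdd h * (Multiplicative.toAdd g)⁻¹).val, ZMod.val_lt _, ?_⟩
    have : ∀ a b : Multiplicative (ZMod p), Multiplicative.toAdd a = Multiplicative.toAdd b → a = b :=
      fun a b hab => hab
    apply this
    rw [toAdd_pow, nsmul_eq_mul,
      ZMod.natCast_rightInverse (Multiplicative.toAdd h * (Multiplicative.toAdd g)⁻¹),
      inv_mul_cancel_right₀ ha]
  have hsp : s ^ p = 1 := by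
    have hgp : g ^ p = 1 := by
      have : Multiplicative.toAdd (g ^ p) = Multiplicative.toAdd (1 : Multiplicative (ZMod p)) := by
        rw [toAdd_pow, nsmul_eq_mul]
        simp
      exact this
    rw [hs, ← map_pow, hgp, map_one]
  have hstep : ∀ i : ℕ, s ^ i • w = s ^ (i + 1) • x - s ^ i • x := by
    intro i
    rw [hwdef, smul_sub, pow_succ, mul_smul]
  have hN : ∑ i ∈ Finset.range p, s ^ i • w = 0 := by
    simp_rw [hstep]
    rw [Finset.sum_range_sub (fun i => s ^ i • x), hsp, one_smul, pow_zero, one_smul, sub_self]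
  have hp1 : 0 < p - 1 := by have := hp.two_le; omega
  set b : Fin (p - 1) → M := fun k => s ^ (k : ℕ) • w with hb
  set S : Submodule ℤ M := Submodule.span ℤ (Set.range b) with hS
  have hbS : ∀ k : Fin (p - 1), s ^ (k : ℕ) • w ∈ S := fun k => Submodule.subset_span ⟨k, rfl⟩
  have hlast : s ^ (p - 1) • w = - ∑ i ∈ Finset.range (p - 1), s ^ i • w := by
    have h2 : ∑ i ∈ Finset.range ((p - 1) + 1), s ^ i • w = 0 := by
      rw [Nat.sub_add_cancel hp.pos]; exact hN
    rw [Finset.sum_range_succ] at h2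
    exact eq_neg_of_add_eq_zero_left (by rw [add_comm]; exact h2)
  have hpow_mem : ∀ n : ℕ, n < p → s ^ n • w ∈ S := by
    intro n hn
    rcases lt_or_eq_of_le (by omega : n ≤ p - 1) with h | h
    · exact hbS ⟨n, h⟩
    · subst h
      rw [hlast]
      refine neg_mem (Submodule.sum_mem _ fun i hi => ?_)
      exact hbS ⟨i, Finset.mem_range.mp hi⟩
  have hkey : ∀ a : MonoidAlgebra ℤ (Multiplicative (ZMod p)), a • w ∈ S := by
    intro a
    induction a using MonoidAlgebra.induction_on with
    | of h =>
      obtain ⟨n, hn, rfl⟩ := hcover h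
      rw [map_pow]
      exact hpow_mem n hn
    | add f g hf hg => rw [add_smul]; exact S.add_mem hf hg
    | smul r f hf => rw [smul_assoc]; exact S.smul_mem r hf
  have hsmul_mem : ∀ (a : MonoidAlgebra ℤ (Multiplicative (ZMod p))) (m : M), m ∈ S → a • m ∈ S := by
    intro a m hm
    induction hm using Submodule.span_induction with
    | mem y hy =>
      obtain ⟨k, rfl⟩ := hy
      rw [hb]
      rw [← mul_smul]
      exact hkey _
    | zero => rw [smul_zero]; exact S.zero_mem
    | add y z _ _ hy hz => rw [smul_add]; exact S.add_mem hy hz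
    | smul z y _ hy => rw [smul_comm]; exact S.smul_mem z hy
  set T : Submodule (MonoidAlgebra ℤ (Multiplicative (ZMod p))) M :=
    { carrier := S
      add_mem' := fun h1 h2 => S.add_mem h1 h2
      zero_mem' := S.zero_mem
      smul_mem' := fun a {m} hm => hsmul_mem a m hm } with hT
  have hwT : w ∈ T := by
    have := hbS ⟨0, hp1⟩
    rwa [pow_zero, one_smul] at this
  -- linear independence of b
  have hli : LinearIndependent ℤ b := by
    rw [Fintype.linearIndependent_iff]
    intro c hc j
    by_contra hj
    simp only [hb] at hc
    set f : Polynomial ℤ := ∑ i : Fin (p - 1), Polynomial.monomial (i : ℕ) (c i) with hf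
    have hcoeff : f.coeff (j : ℕ) = c j := by
      rw [hf, Polynomial.finset_sum_coeff]
      simp only [Polynomial.coeff_monomial]
      rw [Finset.sum_eq_single j]
      · simp
      · intro i _ hij
        rw [if_neg (fun hh => hij (Fin.ext hh))]
      · intro hj'
        exact absurd (Finset.mem_univ j) hj'
    have hf0 : f ≠ 0 := fun h => hj (by rw [← hcoeff, h, Polynomial.coeff_zero])
    have hdeg : f.degree < ((p - 1 : ℕ) : WithBot ℕ) := by
      rw [hf]
      apply lt_of_le_of_lt (Polynomial.degree_sum_le _ _)
      rw [Finset.sup_lt_iff (by exact_mod_cast WithBot.bot_lt_coe (p - 1))]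
      intro i _
      exact lt_of_le_of_lt (Polynomial.degree_monomial_le _ _) (by exact_mod_cast i.isLt)
    have hfw : (Polynomial.aeval s f) • w = 0 := by
      rw [hf, map_sum, Finset.sum_smul, ← hc]
      apply Finset.sum_congr rfl
      intro i _
      rw [Polynomial.aeval_monomial, mul_smul, algebraMap_smul]
    have hPhiw : (Polynomial.aeval s (Polynomial.cyclotomic p ℤ)) • w = 0 := by
      rw [Polynomial.cyclotomic_prime, map_sum, Finset.sum_smul, ← hN]
      apply Finset.sum_congr rfl
      intro i _
      rw [map_pow, Polynomial.aeval_X]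
    have hmapinj : Function.Injective (Polynomial.map (Int.castRingHom ℚ)) :=
      Polynomial.map_injective _ Int.cast_injective
    have hfQ0 : f.map (Int.castRingHom ℚ) ≠ 0 := fun h =>
      hf0 (hmapinj (by simpa using h))
    have hdegQ : (f.map (Int.castRingHom ℚ)).degree < (Polynomial.cyclotomic p ℚ).degree := by
      rw [Polynomial.degree_map_eq_of_injective Int.cast_injective]
      have hq : (Polynomial.cyclotomic p ℚ).degree = ((p - 1 : ℕ) : WithBot ℕ) := by
        rw [Polynomial.degree_eq_natDegree (Polynomial.cyclotomic_ne_zero p ℚ),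
          Polynomial.natDegree_cyclotomic, Nat.totient_prime hp]
      rw [hq]
      exact hdeg
    have hnd : ¬ Polynomial.cyclotomic p ℚ ∣ f.map (Int.castRingHom ℚ) := fun hdvd =>
      hfQ0 (Polynomial.eq_zero_of_dvd_of_degree_lt hdvd hdegQ)
    have hcop : IsCoprime (Polynomial.cyclotomic p ℚ) (f.map (Int.castRingHom ℚ)) :=
      ((Polynomial.cyclotomic.irreducible_rat hp.pos).coprime_iff_not_dvd).mpr hnd
    obtain ⟨u, v, huv⟩ := hcop
    have hdenom : ∀ q : Polynomial ℚ, ∃ (Q : Polynomial ℤ) (n : ℤ), n ≠ 0 ∧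
        Q.map (Int.castRingHom ℚ) = Polynomial.C (n : ℚ) * q := by
      intro q
      obtain ⟨bb, hbb⟩ := IsLocalization.integerNormalization_map_to_map (nonZeroDivisors ℤ) q
      refine ⟨IsLocalization.integerNormalization (nonZeroDivisors ℤ) q, bb,
        nonZeroDivisors.coe_ne_zero bb, ?_⟩
      have : algebraMap ℤ ℚ = Int.castRingHom ℚ := rfl
      rw [← this, hbb]
      ext k
      simp [Polynomial.coeff_smul, Polynomial.coeff_C_mul, zsmul_eq_mul]
    obtain ⟨U, nu, hnu, hU⟩ := hdenom u
    obtain ⟨V, nv, hnv, hV⟩ := hdenom v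
    have hZ : U * Polynomial.cyclotomic p ℤ * Polynomial.C nv
        + V * f * Polynomial.C nu = Polynomial.C (nu * nv) := by
      apply hmapinj
      rw [Polynomial.map_add, Polynomial.map_mul, Polynomial.map_mul, Polynomial.map_mul,
        Polynomial.map_mul, hU, hV, Polynomial.map_cyclotomic_int, Polynomial.map_C,
        Polynomial.map_C, Polynomial.map_C]
      calc Polynomial.C (nu : ℚ) * u * Polynomial.cyclotomic p ℚ * Polynomial.C (nv : ℚ)
            + Polynomial.C (nv : ℚ) * v * f.map (Int.castRingHom ℚ) * Polynomial.C (nu : ℚ)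
          = Polynomial.C (nu : ℚ) * Polynomial.C (nv : ℚ)
            * (u * Polynomial.cyclotomic p ℚ + v * f.map (Int.castRingHom ℚ)) := by ring
        _ = Polynomial.C ((nu : ℚ) * (nv : ℚ)) := by rw [huv, mul_one, Polynomial.C_mul]
        _ = Polynomial.C ((Int.castRingHom ℚ) (nu * nv)) := by norm_cast
    have final : (nu * nv) • w = 0 := by
      have h3 : (Polynomial.aeval s (Polynomial.C (nu * nv))) • w = (nu * nv) • w := by
        rw [Polynomial.aeval_C, algebraMap_smul]
      rw [← h3, ← hZ, map_add, add_smul]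
      have e1 : (Polynomial.aeval s (U * Polynomial.cyclotomic p ℤ * Polynomial.C nv)) • w
          = 0 := by
        rw [show U * Polynomial.cyclotomic p ℤ * Polynomial.C nv
          = U * Polynomial.C nv * Polynomial.cyclotomic p ℤ by ring, map_mul, mul_smul,
          hPhiw, smul_zero]
      have e2 : (Polynomial.aeval s (V * f * Polynomial.C nu)) • w = 0 := by
        rw [show V * f * Polynomial.C nu = V * Polynomial.C nu * f by ring, map_mul,
          mul_smul, hfw, smul_zero]
      rw [e1, e2, add_zero]
    rcases smul_eq_zero.mp final with h | h
    · exact mul_ne_zero hnu hnv h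
    · exact hw h
  -- nontrivial action on w
  have hsw : s • w ≠ w := by
    intro hsweq
    have hpow : ∀ i : ℕ, s ^ i • w = w := by
      intro i
      induction i with
      | zero => rw [pow_zero, one_smul]
      | succ n ih => rw [pow_succ, mul_smul, hsweq, ih]
    have hpz : (p : ℤ) • w = 0 := by
      have h4 := hN
      simp_rw [hpow] at h4
      rw [Finset.sum_const, Finset.card_range] at h4
      rw [natCast_zsmul]
      exact h4
    rcases smul_eq_zero.mp hpz with h | h
    · exact hp.ne_zero (by exact_mod_cast h)
    · exact hw h
  -- compute finrank
  have hbasis : Module.Basis (Fin (p - 1)) ℤ S := Module.Basis.span hli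
  have hfinrank : Module.finrank ℤ S = p - 1 := by
    rw [Module.finrank_eq_card_basis hbasis, Fintype.card_fin]
  have hST : S = T.restrictScalars ℤ := by
    apply le_antisymm
    · rw [hS, Submodule.span_le]
      rintro y ⟨k, rfl⟩
      exact hbS k
    · intro y hy
      exact hy
  have hTrank : Module.finrank ℤ T = p - 1 := by
    have e := (Submodule.restrictScalarsEquiv ℤ (MonoidAlgebra ℤ (Multiplicative (ZMod p))) M
      T).restrictScalars ℤ
    rw [← LinearEquiv.finrank_eq e, ← hST]
    exact hfinrank
  refine ⟨T, hTrank, g, ⟨w, hwT⟩, ?_⟩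
  intro hcontra
  apply hsw
  have h5 := congrArg Subtype.val hcontra
  rw [hs]
  simpa using h5
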